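/- For n ≥ 1, the signed generating function of excedances over the symmetric group satisfies ∑_{σ ∈ S_n} q^{exc(σ)} (−1)^{cyc(σ)} = −(q−1)^{n−1}, where exc(σ) = #{i ∈ [n] : σ(i) > i} and cyc(σ) is the number of cycles of σ. -/

import Mathlib

open Finset Polynomial

/-- Number of excedances of a permutation of `{1,…,n}` (as `Fin n`). -/
def excS {n : ℕ} (σ : Equiv.Perm (Fin n)) : ℕ :=
  (Finset.univ.filter fun i => i < σ i).card

/-- Number of cycles of a permutation, counting fixed points as 1-cycles. -/
def cyc {n : ℕ} (σ : Equiv.Perm (Fin n)) : ℕ :=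
  (Finset.univ.filter fun i => σ i = i).card + σ.cycleType.card

lemma neg_one_pow_arith {R : Type*} [CommRing R] (s c n : ℕ) (h : s ≤ n) :
    (-1 : R)^(n - s + c) = (-1)^n * (-1)^(s + c) := by
  obtain ⟨k, rfl⟩ := Nat.exists_eq_add_of_le h
  rw [Nat.add_sub_cancel_left]
  have h1 : ((-1 : R))^s * (-1)^s = 1 := by
    rw [← pow_add, ← two_mul, pow_mul]; norm_num
  calc ((-1 : R))^(k + c) = ((-1)^s * (-1)^s) * (-1)^(k+c) := by rw [h1, one_mul]
    _ = (-1)^(s+k) * (-1)^(s+c) := by rw [pow_add, pow_add, pow_add]; ring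

lemma neg_one_pow_cyc {n : ℕ} (σ : Equiv.Perm (Fin n)) :
    ((-1 : Polynomial ℤ)) ^ cyc σ
      = (-1)^n * ((Equiv.Perm.sign σ : ℤ) : Polynomial ℤ) := by
  have hs : σ.support.card ≤ n := by
    simpa using Finset.card_le_card (Finset.subset_univ σ.support)
  have hfix : (Finset.univ.filter fun i => σ i = i).card = n - σ.support.card := by
    have h := Finset.card_filter_add_card_filter_not
      (s := (univ : Finset (Fin n))) (p := fun i => σ i = i)
    have h2 : (univ.filter fun i => ¬ σ i = i) = σ.support := rfl
    rw [h2, Finset.card_univ, Fintype.card_fin] at h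
    omega
  have hsign : ((Equiv.Perm.sign σ : ℤ) : Polynomial ℤ)
      = (-1) ^ (σ.support.card + σ.cycleType.card) := by
    rw [Equiv.Perm.sign_of_cycleType, Equiv.Perm.sum_cycleType]
    push_cast
    ring
  rw [cyc, hfix, hsign, neg_one_pow_arith _ _ _ hs]

lemma detM_eq (m : ℕ) :
    (Matrix.of fun i j : Fin (m+1) => if (j:ℕ) < (i:ℕ) then (X : Polynomial ℤ) else 1).det
      = (-1)^m * ((X : Polynomial ℤ) - 1)^m := by
  set R := Polynomial ℤ
  set Mf : Matrix (Fin (m+1)) (Fin (m+1)) R :=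
    Matrix.of fun i j => if (j:ℕ) < (i:ℕ) then (X : R) else 1 with hMf
  set U : Matrix (Fin (m+1)) (Fin (m+1)) R :=
    Matrix.of fun i j => if i = j then 1 else if (i:ℕ) = (j:ℕ)+1 then -1 else 0 with hUdef
  set N : Matrix (Fin (m+1)) (Fin (m+1)) R :=
    Matrix.of fun i j => if (j:ℕ) = m then 1 else if (i:ℕ) = (j:ℕ)+1 then X - 1 else 0 with hNdef
  have hU : U.det = 1 := by
    rw [Matrix.det_of_lowerTriangular U (fun i j hij => ?_)]
    · simp only [hUdef, Matrix.of_apply, if_pos rfl]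
      exact Finset.prod_const_one
    · rw [OrderDual.toDual_lt_toDual] at hij
      have h1 : i ≠ j := ne_of_lt hij
      have h2 : ¬ ((i:ℕ) = (j:ℕ)+1) := by rw [Fin.lt_def] at hij; omega
      simp [hUdef, h1, h2]
  have hMU : Mf * U = N := by
    funext i j
    rw [Matrix.mul_apply]
    by_cases hj : (j:ℕ) < m
    · set j' : Fin (m+1) := ⟨(j:ℕ)+1, by omega⟩ with hj'
      have hval : (j' : ℕ) = (j:ℕ)+1 := rfl
      have hjj' : j' ≠ j := by
        intro h; apply_fun (·.val) at h; rw [hval] at h; omega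
      have key : ∀ k : Fin (m+1), Mf i k * U k j
          = (if j = k then Mf i j else 0) + (if j' = k then -(Mf i j') else 0) := by
        intro k
        by_cases h1 : k = j
        · subst h1
          simp [hUdef, hjj']
        · by_cases h2 : k = j'
          · have h3 : (k:ℕ) = (j:ℕ)+1 := by rw [h2, hval]
            simp [hUdef, h1, h3, ← h2, Ne.symm h1]
            exact mul_neg_one _
          · have h3 : ¬ ((k:ℕ) = (j:ℕ)+1) := by
              intro h; exact h2 (Fin.ext (by rw [hval]; exact h))
            simp [hUdef, h1, h3, Ne.symm h1, Ne.symm h2]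
      rw [Finset.sum_congr rfl (fun k _ => key k), Finset.sum_add_distrib,
        Finset.sum_ite_eq, Finset.sum_ite_eq]
      simp only [Finset.mem_univ, if_true, hMf, hNdef, Matrix.of_apply, hval]
      have him : (i : ℕ) ≤ m := by omega
      split_ifs <;> first | ring1 | (exfalso; omega)
    · have hjm : (j:ℕ) = m := by omega
      have key : ∀ k : Fin (m+1), Mf i k * U k j = (if j = k then Mf i j else 0) := by
        intro k
        by_cases h1 : k = j
        · subst h1; simp [hUdef]
        · have h3 : ¬ ((k:ℕ) = (j:ℕ)+1) := by have := k.isLt; omega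
          simp [hUdef, h1, h3, Ne.symm h1]
      rw [Finset.sum_congr rfl (fun k _ => key k), Finset.sum_ite_eq]
      have him : (i : ℕ) ≤ m := by omega
      simp only [Finset.mem_univ, if_true, hMf, hNdef, Matrix.of_apply, hjm]
      split_ifs <;> first | ring1 | (exfalso; omega)
  set Q : Matrix (Fin (m+1)) (Fin (m+1)) R :=
    Matrix.of fun i j => if (j:ℕ) = 0 then 1 else if i = j then X - 1 else 0 with hQdef
  have hQdet : Q.det = (X - 1)^m := by
    rw [Matrix.det_of_lowerTriangular Q (fun i j hij => ?_)]
    · rw [Fin.prod_univ_succ]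
      simp [hQdef]
    · rw [OrderDual.toDual_lt_toDual] at hij
      have h0 : ¬ ((j:ℕ) = 0) := by rw [Fin.lt_def] at hij; omega
      have h1 : i ≠ j := ne_of_lt hij
      simp [hQdef, h0, h1]
      exact fun h => h0 (by simp [h])
  have hNQ : N = Q.submatrix id (finRotate (m+1)) := by
    funext i j
    simp only [Matrix.submatrix_apply, id, finRotate_succ_apply, hQdef, hNdef, Matrix.of_apply]
    rcases eq_or_ne j (Fin.last m) with rfl | hj
    · simp [Fin.val_add_one, Fin.last]
    · have hv : ((j + 1 : Fin (m+1)) : ℕ) = (j:ℕ) + 1 := by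
        rw [Fin.val_add_one]; simp [hj]
      have hjm : (j:ℕ) ≠ m := fun h => hj (Fin.ext h)
      simp only [hv, hjm, if_false, Nat.succ_ne_zero]
      have : i = j + 1 ↔ (i:ℕ) = (j:ℕ)+1 := by rw [Fin.ext_iff, hv]
      split_ifs with h1 h2 h2 <;> first | rfl | (exfalso; omega) |
        (exfalso; rw [this] at *; omega)
  have hsign : ((Equiv.Perm.sign (finRotate (m+1)) : ℤ) : R) = (-1)^m := by
    rw [sign_finRotate]; push_cast
    exact (Int.cast_pow (-1) m).trans (congrArg (· ^ m) ((Int.cast_neg 1).trans (congrArg Neg.neg Int.cast_one)))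
  have hNdet : N.det = (-1)^m * (X - 1)^m := by
    rw [hNQ, Matrix.det_permute', hQdet, hsign]
  calc Mf.det = Mf.det * U.det := by rw [hU, mul_one]
    _ = N.det := by rw [← Matrix.det_mul, hMU]
    _ = (-1)^m * (X - 1)^m := hNdet

theorem signed_exc_sum_symm (n : ℕ) (hn : 1 ≤ n) :
    ∑ σ : Equiv.Perm (Fin n), (-1 : Polynomial ℤ) ^ cyc σ * X ^ excS σ
      = -((X : Polynomial ℤ) - 1) ^ (n - 1) := by
  obtain ⟨m, rfl⟩ : ∃ m, n = m + 1 := ⟨n - 1, by omega⟩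
  set R := Polynomial ℤ with hR
  set Mf : Matrix (Fin (m+1)) (Fin (m+1)) R :=
    Matrix.of fun i j => if (j:ℕ) < (i:ℕ) then (X : R) else 1 with hMf
  have hprod : ∀ σ : Equiv.Perm (Fin (m+1)), X ^ excS σ = ∏ i, Mf (σ i) i := by
    intro σ
    rw [excS, ← Finset.prod_const, Finset.prod_filter]
    refine Finset.prod_congr rfl fun i _ => ?_
    rw [hMf, Matrix.of_apply]
    congr 1
  have h1 : ∀ σ : Equiv.Perm (Fin (m+1)), (-1 : R) ^ cyc σ * X ^ excS σ
      = (-1)^(m+1) * (((Equiv.Perm.sign σ : ℤ) : R) * ∏ i, Mf (σ i) i) := by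
    intro σ
    rw [neg_one_pow_cyc, hprod σ]
    ring
  rw [Finset.sum_congr rfl (fun σ _ => h1 σ), ← Finset.mul_sum, ← Matrix.det_apply',
    detM_eq m]
  have h2 : ((-1 : R))^(m+1) * (-1)^m = -1 := by
    rw [← pow_add]
    exact Odd.neg_one_pow ⟨m, by ring⟩
  calc ((-1 : R))^(m+1) * ((-1)^m * (X - 1)^m) = ((-1)^(m+1) * (-1)^m) * (X-1)^m := by ring
    _ = -((X : R) - 1) ^ (m + 1 - 1) := by rw [h2, Nat.add_sub_cancel]; ring
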